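/- Let Y be a real random variable with |Y| ≤ 1 almost surely and E(Y) = 0. Then for every λ ∈ [−1,1], E(e^{λY}) ≤ e^{λ² Var(Y)}. -/

import Mathlib

open MeasureTheory ProbabilityTheory

lemma exp_le_one_add_add_sq {x : ℝ} (hx : |x| ≤ 1) : Real.exp x ≤ 1 + x + x ^ 2 := by
  have h := Real.exp_bound hx (n := 3) (by norm_num)
  have h1 := (abs_sub_le_iff.1 h).1
  have hs : ∑ m ∈ Finset.range 3, x ^ m / m.factorial = 1 + x + x ^ 2 / 2 := by
    simp [Finset.sum_range_succ]
  rw [hs] at h1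
  norm_num [Nat.factorial] at h1
  have h3 : |x| ^ 3 ≤ x ^ 2 := by
    calc |x| ^ 3 = |x| ^ 2 * |x| := by ring
    _ ≤ |x| ^ 2 * 1 := by nlinarith [sq_abs x, sq_nonneg x]
    _ = x ^ 2 := by rw [sq_abs]; ring
  nlinarith

theorem subexponential_moment_bound
    {Ω : Type*} [MeasurableSpace Ω] (μ : Measure Ω) [IsProbabilityMeasure μ]
    (Y : Ω → ℝ) (hmeas : Measurable Y)
    (hbdd : ∀ᵐ ω ∂μ, |Y ω| ≤ 1) (hmean : ∫ ω, Y ω ∂μ = 0)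
    (lam : ℝ) (hlam : lam ∈ Set.Icc (-1 : ℝ) 1) :
    ∫ ω, Real.exp (lam * Y ω) ∂μ ≤ Real.exp (lam ^ 2 * variance Y μ) := by
  obtain ⟨hl1, hl2⟩ := hlam
  have hlabs : |lam| ≤ 1 := abs_le.2 ⟨hl1, hl2⟩
  -- integrability
  have hY_int : Integrable Y μ :=
    (integrable_const (1:ℝ)).mono' hmeas.aestronglyMeasurable (by simpa using hbdd)
  have hY2_int : Integrable (fun ω => Y ω ^ 2) μ := by
    refine (integrable_const (1:ℝ)).mono' (hmeas.pow_const 2).aestronglyMeasurable ?_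
    filter_upwards [hbdd] with ω hω
    have := abs_le.1 hω
    simp only [Real.norm_eq_abs, abs_pow, sq_abs]
    nlinarith
  have hexp_int : Integrable (fun ω => Real.exp (lam * Y ω)) μ := by
    refine (integrable_const (Real.exp 1)).mono'
      ((Real.measurable_exp.comp (measurable_const.mul hmeas)).aestronglyMeasurable) ?_
    filter_upwards [hbdd] with ω hω
    rw [Real.norm_eq_abs, abs_of_pos (Real.exp_pos _), Real.exp_le_exp]
    calc lam * Y ω ≤ |lam * Y ω| := le_abs_self _
    _ = |lam| * |Y ω| := abs_mul _ _
    _ ≤ 1 * 1 := mul_le_mul hlabs hω (abs_nonneg _) zero_le_one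
    _ = 1 := by ring
  -- variance = E Y^2
  have hmem : MemLp Y 2 μ := by
    refine memLp_of_bounded (a := -1) (b := 1) ?_ hmeas.aestronglyMeasurable 2
    filter_upwards [hbdd] with ω hω
    exact abs_le.1 hω
  have hvar : variance Y μ = ∫ ω, Y ω ^ 2 ∂μ := by
    rw [variance_eq_sub hmem]
    simp only [Pi.pow_apply]
    rw [hmean]
    ring_nf
  -- pointwise bound
  have hpt : ∀ᵐ ω ∂μ, Real.exp (lam * Y ω) ≤ 1 + lam * Y ω + lam ^ 2 * Y ω ^ 2 := by
    filter_upwards [hbdd] with ω hω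
    have habs : |lam * Y ω| ≤ 1 := by
      rw [abs_mul]
      calc |lam| * |Y ω| ≤ 1 * 1 := mul_le_mul hlabs hω (abs_nonneg _) zero_le_one
      _ = 1 := by ring
    have := exp_le_one_add_add_sq habs
    calc Real.exp (lam * Y ω) ≤ 1 + lam * Y ω + (lam * Y ω) ^ 2 := this
    _ = 1 + lam * Y ω + lam ^ 2 * Y ω ^ 2 := by ring
  have hrhs_int : Integrable (fun ω => 1 + lam * Y ω + lam ^ 2 * Y ω ^ 2) μ :=
    ((integrable_const 1).add (hY_int.const_mul lam)).add (hY2_int.const_mul (lam ^ 2))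
  calc ∫ ω, Real.exp (lam * Y ω) ∂μ
      ≤ ∫ ω, 1 + lam * Y ω + lam ^ 2 * Y ω ^ 2 ∂μ :=
        integral_mono_ae hexp_int hrhs_int hpt
    _ = 1 + lam * ∫ ω, Y ω ∂μ + lam ^ 2 * ∫ ω, Y ω ^ 2 ∂μ := by
        have e1 : ∫ ω, 1 + lam * Y ω + lam ^ 2 * Y ω ^ 2 ∂μ
            = (∫ ω, 1 + lam * Y ω ∂μ) + ∫ ω, lam ^ 2 * Y ω ^ 2 ∂μ :=
          integral_add ((integrable_const 1).add (hY_int.const_mul lam)) (hY2_int.const_mul _)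
        have e2 : ∫ ω, 1 + lam * Y ω ∂μ = (∫ _ω, (1:ℝ) ∂μ) + ∫ ω, lam * Y ω ∂μ :=
          integral_add (integrable_const 1) (hY_int.const_mul lam)
        rw [e1, e2, integral_const, integral_const_mul, integral_const_mul]
        simp
    _ = 1 + lam ^ 2 * variance Y μ := by rw [hmean, hvar]; ring
    _ ≤ Real.exp (lam ^ 2 * variance Y μ) := by
        have := Real.add_one_le_exp (lam ^ 2 * variance Y μ)
        linarith
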